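/- Let q = p^d with p prime and d ≥ 1, and let C be a code in the Hamming graph H(m,q) with minimum distance δ ≥ 5 containing the zero vertex 0. Suppose X ≤ Aut(C) is such that C is X-alphabet-affine and (X,2)-neighbour-transitive. Let N be a normal p-subgroup of K = X ∩ B containing every normal p-subgroup of K (i.e., N = O_p(K)), and let W be the orbit of 0 under N. Then: (1) W ⊆ C, and W is an F_p-subspace of V = (F_p^d)^M invariant under the stabiliser X_0 of 0 in X; (2) N equals the translation group T_W = {t_α : α ∈ W} and the setwise stabiliser X_W of W in X equals T_W ⋊ X_0; (3) W is (X_W,2)-neighbour-transitive and its minimum distance is at least 5; (4) W is X_W-alphabet-affine. -/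

import Mathlib

open Equiv

namespace Paper

/-- A Hamming-graph automorphism of `Fin m → Q` given by entrywise permutations `h`
and a permutation `σ` of the entries. -/
def IsQAutPair {m : ℕ} {Q : Type*} (g : Perm (Fin m → Q)) (h : Fin m → Perm Q)
    (σ : Perm (Fin m)) : Prop :=
  ∀ α i, g α i = h i (α (σ.symm i))

/-- `g` is an automorphism of the Hamming graph `H(m,q)`. -/
def IsQAut {m : ℕ} {Q : Type*} (g : Perm (Fin m → Q)) : Prop :=
  ∃ h σ, IsQAutPair g h σ

/-- The permutation group `X_i^{Q_i}` induced on the alphabet in entry `i`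
by the stabiliser in `X` of the entry `i`. -/
def indQ {m : ℕ} {Q : Type*} (X : Set (Perm (Fin m → Q))) (i : Fin m) : Set (Perm Q) :=
  {π | ∃ g ∈ X, ∃ h σ, IsQAutPair g h σ ∧ σ i = i ∧ h i = π}

/-- `C_s`, the set of vertices at Hamming distance exactly `s` from the code `C`. -/
def distSet {m : ℕ} {Q : Type*} [DecidableEq Q] (C : Set (Fin m → Q)) (s : ℕ) :
    Set (Fin m → Q) :=
  {v | (∃ c ∈ C, hammingDist v c = s) ∧ ∀ c ∈ C, s ≤ hammingDist v c}

/-- `C` is `(X,s)`-neighbour-transitive: `X` acts transitively on each of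
`C = C_0, C_1, …, C_s`. -/
def NbrTrans {m : ℕ} {Q : Type*} [DecidableEq Q] (X : Set (Perm (Fin m → Q)))
    (C : Set (Fin m → Q)) (s : ℕ) : Prop :=
  ∀ j ≤ s, ∀ u ∈ distSet C j, ∀ v ∈ distSet C j, ∃ g ∈ X, g u = v

/-- `δ` is the minimum distance of the code `C`. -/
def IsMinDist {m : ℕ} {Q : Type*} [DecidableEq Q] (C : Set (Fin m → Q)) (δ : ℕ) : Prop :=
  (∃ u ∈ C, ∃ v ∈ C, u ≠ v ∧ hammingDist u v = δ) ∧
  ∀ u ∈ C, ∀ v ∈ C, u ≠ v → δ ≤ hammingDist u v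

/-- The alphabet `Q = F_p^d`. -/
abbrev QA (p d : ℕ) : Type := Fin d → ZMod p

/-- The vertex set `V = (F_p^d)^M` of `H(m, p^d)`. -/
abbrev VA (p d m : ℕ) : Type := Fin m → QA p d

/-- The subgroup of `Sym(A)` consisting of all translations `v ↦ v + a`. -/
def TransSub (A : Type*) [AddCommGroup A] : Subgroup (Perm A) where
  carrier := {g : Perm A | ∃ a : A, ∀ v, g v = v + a}
  one_mem' := ⟨0, fun v => by simp⟩
  mul_mem' := fun {f g} hf hg => by
    obtain ⟨a, ha⟩ := hf
    obtain ⟨b, hb⟩ := hg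
    exact ⟨b + a, fun v => by rw [Perm.mul_apply, hb, ha, add_assoc]⟩
  inv_mem' := fun {f} hf => by
    obtain ⟨a, ha⟩ := hf
    refine ⟨-a, fun v => ?_⟩
    have h1 : f (v + -a) = v := by rw [ha]; abel
    calc f⁻¹ v = f⁻¹ (f (v + -a)) := by rw [h1]
      _ = v + -a := by first | simp | exact Equiv.symm_apply_apply f (v + -a)

/-- `K = X ∩ B`, the kernel of the action of `X` on the set of entries `M`:
the elements of `X` acting entrywise (with trivial permutation of `M`). -/
def KSet {p d m : ℕ} (X : Set (Perm (VA p d m))) : Set (Perm (VA p d m)) :=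
  {g | g ∈ X ∧ ∃ h, IsQAutPair g h 1}

/-- The group `K^{Q_i}` induced on the alphabet in entry `i` by `K = X ∩ B`. -/
def indK {p d m : ℕ} (X : Set (Perm (VA p d m))) (i : Fin m) : Set (Perm (QA p d)) :=
  {π | ∃ g ∈ X, ∃ h, IsQAutPair g h 1 ∧ h i = π}

/-- `C` is `X`-alphabet-affine: `X ≤ Aut(C)`, `K ≠ 1`, `X` is transitive on the entries,
and each `X_i^{Q_i}` is an affine 2-transitive group, i.e. it is 2-transitive on `Q_i`
and contains the translation group `T_i` as a normal subgroup. -/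
def AlphabetAffine {p d m : ℕ} (X : Set (Perm (VA p d m))) (C : Set (VA p d m)) : Prop :=
  (∀ g ∈ X, IsQAut g) ∧
  (∀ g ∈ X, g '' C = C) ∧
  (∃ g ∈ KSet X, g ≠ 1) ∧
  (∀ i j : Fin m, ∃ g ∈ X, ∃ h σ, IsQAutPair g h σ ∧ σ i = j) ∧
  (∀ i : Fin m,
    (∀ a b a' b' : QA p d, a ≠ b → a' ≠ b' → ∃ π ∈ indQ X i, π a = a' ∧ π b = b') ∧
    ((TransSub (QA p d) : Set (Perm (QA p d))) ⊆ indQ X i) ∧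
    (∀ π ∈ indQ X i, ∀ t ∈ TransSub (QA p d), π * t * π⁻¹ ∈ TransSub (QA p d)))

theorem _root_.Equiv.Perm.apply_inv_self {α : Type*} (f : Perm α) (x : α) : f (f⁻¹ x) = x :=
  f.apply_symm_apply x

theorem _root_.Equiv.Perm.inv_apply_self {α : Type*} (f : Perm α) (x : α) : f⁻¹ (f x) = x :=
  f.symm_apply_apply x


section Pairs
variable {m : ℕ} {Q : Type*}

theorem qp_one : IsQAutPair (1 : Perm (Fin m → Q)) (fun _ => 1) 1 := fun _ _ => rfl

theorem qp_mul {g₁ g₂ : Perm (Fin m → Q)} {h₁ h₂ : Fin m → Perm Q} {σ₁ σ₂ : Perm (Fin m)}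
    (H1 : IsQAutPair g₁ h₁ σ₁) (H2 : IsQAutPair g₂ h₂ σ₂) :
    IsQAutPair (g₁ * g₂) (fun i => h₁ i * h₂ (σ₁⁻¹ i)) (σ₁ * σ₂) := by
  intro α i
  have e1 : (g₁ * g₂) α = g₁ (g₂ α) := rfl
  rw [e1, H1, H2]
  rfl

theorem qp_inv {g : Perm (Fin m → Q)} {h : Fin m → Perm Q} {σ : Perm (Fin m)}
    (H : IsQAutPair g h σ) :
    IsQAutPair g⁻¹ (fun i => (h (σ i))⁻¹) σ⁻¹ := by
  intro α i
  have h1 : α (σ i) = h (σ i) ((g⁻¹ α) (σ.symm (σ i))) := by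
    conv_lhs => rw [← g.apply_inv_self α]
    exact H (g⁻¹ α) (σ i)
  rw [σ.symm_apply_apply] at h1
  show g⁻¹ α i = (h (σ i))⁻¹ (α ((σ⁻¹).symm i))
  have h2 : (σ⁻¹).symm i = σ i := rfl
  rw [h2, h1, Perm.inv_apply_self]

theorem qp_unique {g : Perm (Fin m → Q)} {h h' : Fin m → Perm Q}
    (H : IsQAutPair g h 1) (H' : IsQAutPair g h' 1) : ∀ i, h i = h' i := by
  intro i
  ext a
  have e1 := H (fun _ => a) i
  have e2 := H' (fun _ => a) i
  exact e1.symm.trans e2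

theorem qp_apply1 {g : Perm (Fin m → Q)} {h : Fin m → Perm Q}
    (H : IsQAutPair g h 1) (α : Fin m → Q) (i : Fin m) : g α i = h i (α i) := H α i

/-- entrywise maps with all components trivial are trivial -/
theorem qp_eq_one {g : Perm (Fin m → Q)} {h : Fin m → Perm Q}
    (H : IsQAutPair g h 1) (hh : ∀ i, h i = 1) : g = 1 := by
  ext α i
  rw [qp_apply1 H, hh]
  rfl

theorem qp_pow {g : Perm (Fin m → Q)} {h : Fin m → Perm Q}
    (H : IsQAutPair g h 1) (n : ℕ) : IsQAutPair (g ^ n) (fun i => (h i) ^ n) 1 := by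
  induction n with
  | zero => simpa using (qp_one (m := m) (Q := Q))
  | succ n ih =>
      have := qp_mul ih H
      simpa [pow_succ] using this

end Pairs

section Affine
variable {A : Type*} [AddCommGroup A]

theorem mem_TransSub {t : Perm A} : t ∈ TransSub A ↔ ∃ a, ∀ v, t v = v + a := Iff.rfl

theorem transSub_apply {t : Perm A} (ht : t ∈ TransSub A) : ∀ v, t v = v + t 0 := by
  obtain ⟨a, ha⟩ := ht
  intro v
  rw [ha, ha]
  abel

theorem addRight_mem_TransSub (a : A) : Equiv.addRight a ∈ TransSub A :=
  ⟨a, fun v => rfl⟩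

/-- The linear part of an affine permutation. -/
def linA (π : Perm A) (a : A) : A := π a - π 0

/-- `π` is affine: translation-conjugation-compatible. -/
def IsAff (π : Perm A) : Prop := ∀ x a : A, π (x + a) = π x + linA π a

theorem isAff_of_norm {π : Perm A}
    (h : ∀ t ∈ TransSub A, π * t * π⁻¹ ∈ TransSub A) : IsAff π := by
  intro x a
  obtain ⟨w, hw⟩ := h (Equiv.addRight a) (addRight_mem_TransSub a)
  have key : ∀ v, π (π⁻¹ v + a) = v + w := by
    intro v
    have := hw v
    simpa [Perm.mul_apply, Equiv.addRight] using this
  have h1 := key (π x)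
  rw [π.inv_apply_self] at h1
  have h2 := key (π 0)
  rw [π.inv_apply_self, zero_add] at h2
  have hwv : w = linA π a := by
    rw [linA, h2]; abel
  rw [h1, hwv]

theorem linA_zero (π : Perm A) : linA π 0 = 0 := sub_self _

theorem isAff_apply {π : Perm A} (hπ : IsAff π) (a : A) : π a = π 0 + linA π a := by
  have := hπ 0 a
  rwa [zero_add] at this

theorem linA_ne_zero {π : Perm A} {a : A} (ha : a ≠ 0) : linA π a ≠ 0 := by
  intro h
  have : π a = π 0 := by
    have := sub_eq_zero.mp h
    exact this
  exact ha (π.injective this)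

theorem linA_mul {π ρ : Perm A} (hπ : IsAff π) (hρ : IsAff ρ) (a : A) :
    linA (π * ρ) a = linA π (linA ρ a) := by
  have h1 : (π * ρ) a = π (ρ a) := rfl
  have h2 : (π * ρ) 0 = π (ρ 0) := rfl
  rw [linA, h1, h2, isAff_apply hρ a, hπ (ρ 0) (linA ρ a)]
  abel

theorem linA_one (a : A) : linA (1 : Perm A) a = a := by simp [linA]

theorem isAff_of_transSub {t : Perm A} (ht : t ∈ TransSub A) : IsAff t := by
  obtain ⟨c, hc⟩ := ht
  intro x a
  simp [linA, hc]
  abel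

theorem linA_of_transSub {t : Perm A} (ht : t ∈ TransSub A) (a : A) : linA t a = a := by
  obtain ⟨c, hc⟩ := ht
  simp [linA, hc]

theorem transSub_of_linA_id {π : Perm A} (hπ : IsAff π) (h : ∀ a, linA π a = a) :
    π ∈ TransSub A := by
  refine ⟨π 0, fun v => ?_⟩
  have := isAff_apply hπ v
  rw [this, h v]
  abel

theorem transSub_of_comm {π : Perm A} (h : ∀ a v : A, π (v + a) = π v + a) :
    π ∈ TransSub A := by
  refine ⟨π 0, fun v => ?_⟩
  have := h v 0
  rw [zero_add] at this
  rw [this]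
  abel

end Affine

section Ham
variable {m : ℕ} {Q : Type*} [DecidableEq Q]

theorem hd_add_right {A : Type*} [AddCommGroup A] [DecidableEq A]
    (u w z : Fin m → A) : hammingDist (u + z) (w + z) = hammingDist u w := by
  unfold hammingDist
  congr 1
  ext i
  simp

theorem qa_dist {g : Perm (Fin m → Q)} {h : Fin m → Perm Q} {σ : Perm (Fin m)}
    (H : IsQAutPair g h σ) (u v : Fin m → Q) :
    hammingDist (g u) (g v) = hammingDist u v := by
  unfold hammingDist
  apply Finset.card_bij' (fun i _ => σ.symm i) (fun j _ => σ j)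
  · intro i hi
    simp only [Finset.mem_filter, Finset.mem_univ, true_and] at hi ⊢
    rw [H u i, H v i] at hi
    intro hc
    exact hi (by rw [hc])
  · intro j hj
    simp only [Finset.mem_filter, Finset.mem_univ, true_and] at hj ⊢
    rw [H u (σ j), H v (σ j)]
    intro hc
    apply hj
    have := (h (σ j)).injective hc
    rwa [σ.symm_apply_apply] at this
  · intro i _
    simp
  · intro j _
    simp

end Ham

section Groups
variable {p d m : ℕ} {X : Subgroup (Perm (VA p d m))}

theorem mem_KSet {g : Perm (VA p d m)} :
    g ∈ KSet (X : Set (Perm (VA p d m))) ↔ g ∈ X ∧ ∃ h, IsQAutPair g h 1 := Iff.rfl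

theorem ks_one : (1 : Perm (VA p d m)) ∈ KSet (X : Set (Perm (VA p d m))) :=
  ⟨X.one_mem, fun _ => 1, qp_one⟩

theorem ks_mul {a b : Perm (VA p d m)} (ha : a ∈ KSet (X : Set (Perm (VA p d m))))
    (hb : b ∈ KSet (X : Set (Perm (VA p d m)))) :
    a * b ∈ KSet (X : Set (Perm (VA p d m))) := by
  obtain ⟨haX, h1, hp1⟩ := ha
  obtain ⟨hbX, h2, hp2⟩ := hb
  refine ⟨X.mul_mem haX hbX, fun i => h1 i * h2 i, ?_⟩
  have := qp_mul hp1 hp2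
  simpa using this

theorem ks_inv {a : Perm (VA p d m)} (ha : a ∈ KSet (X : Set (Perm (VA p d m)))) :
    a⁻¹ ∈ KSet (X : Set (Perm (VA p d m))) := by
  obtain ⟨haX, h1, hp1⟩ := ha
  refine ⟨X.inv_mem haX, fun i => (h1 i)⁻¹, ?_⟩
  have := qp_inv hp1
  simpa using this

theorem qp_conj {x g : Perm (VA p d m)} {h k : Fin m → Perm (QA p d)} {σ : Perm (Fin m)}
    (hxp : IsQAutPair x h σ) (hgp : IsQAutPair g k 1) :
    IsQAutPair (x * g * x⁻¹) (fun i => h i * k (σ⁻¹ i) * (h i)⁻¹) 1 := by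
  intro α i
  have e1 : (x * g * x⁻¹) α = x (g (x⁻¹ α)) := rfl
  have e3 : α i = h i ((x⁻¹ α) (σ.symm i)) := by
    conv_lhs => rw [← x.apply_inv_self α]
    exact hxp (x⁻¹ α) i
  have e2 : (x⁻¹ α) (σ.symm i) = (h i)⁻¹ (α i) := by
    rw [e3, Perm.inv_apply_self]
  show x (g (x⁻¹ α)) i = (h i * k (σ⁻¹ i) * (h i)⁻¹) (α i)
  rw [hxp (g (x⁻¹ α)) i, qp_apply1 hgp, e2]
  rfl

theorem ks_conj {x g : Perm (VA p d m)} (hx : x ∈ X) (hxq : IsQAut x)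
    (hg : g ∈ KSet (X : Set (Perm (VA p d m)))) :
    x * g * x⁻¹ ∈ KSet (X : Set (Perm (VA p d m))) := by
  obtain ⟨h, σ, hxp⟩ := hxq
  obtain ⟨hgX, k, hgp⟩ := hg
  exact ⟨X.mul_mem (X.mul_mem hx hgX) (X.inv_mem hx), _, qp_conj hxp hgp⟩

theorem indQ_one (i : Fin m) : (1 : Perm (QA p d)) ∈ indQ (X : Set (Perm (VA p d m))) i :=
  ⟨1, X.one_mem, fun _ => 1, 1, qp_one, rfl, rfl⟩

theorem indQ_mul {i : Fin m} {π₁ π₂ : Perm (QA p d)}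
    (h1 : π₁ ∈ indQ (X : Set (Perm (VA p d m))) i)
    (h2 : π₂ ∈ indQ (X : Set (Perm (VA p d m))) i) :
    π₁ * π₂ ∈ indQ (X : Set (Perm (VA p d m))) i := by
  obtain ⟨x1, hx1, h1f, σ1, hp1, hσ1, hc1⟩ := h1
  obtain ⟨x2, hx2, h2f, σ2, hp2, hσ2, hc2⟩ := h2
  refine ⟨x1 * x2, X.mul_mem hx1 hx2, _, σ1 * σ2, qp_mul hp1 hp2, ?_, ?_⟩
  · show σ1 (σ2 i) = i
    rw [hσ2, hσ1]
  · show h1f i * h2f (σ1⁻¹ i) = π₁ * π₂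
    have hiv : σ1⁻¹ i = i := (Equiv.symm_apply_eq σ1).mpr hσ1.symm
    rw [hiv, hc1, hc2]

theorem indQ_inv {i : Fin m} {π : Perm (QA p d)}
    (h1 : π ∈ indQ (X : Set (Perm (VA p d m))) i) :
    π⁻¹ ∈ indQ (X : Set (Perm (VA p d m))) i := by
  obtain ⟨x1, hx1, h1f, σ1, hp1, hσ1, hc1⟩ := h1
  refine ⟨x1⁻¹, X.inv_mem hx1, _, σ1⁻¹, qp_inv hp1, ?_, ?_⟩
  · exact (Equiv.symm_apply_eq σ1).mpr hσ1.symm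
  · show (h1f (σ1 i))⁻¹ = π⁻¹
    rw [hσ1, hc1]

theorem mem_indK {Y : Set (Perm (VA p d m))} {i : Fin m} {π : Perm (QA p d)} :
    π ∈ indK Y i ↔ ∃ g ∈ Y, ∃ h, IsQAutPair g h 1 ∧ h i = π := Iff.rfl

/-- The induced subgroup on entry `i` from a subgroup of entrywise elements. -/
def indKSub (Y : Subgroup (Perm (VA p d m))) (hY : (Y : Set (Perm (VA p d m))) ⊆ {g | ∃ h, IsQAutPair g h 1}) (i : Fin m) : Subgroup (Perm (QA p d)) where
  carrier := indK (Y : Set (Perm (VA p d m))) i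
  one_mem' := ⟨1, Y.one_mem, fun _ => 1, qp_one, rfl⟩
  mul_mem' := by
    rintro a b ⟨g1, hg1, h1, hp1, rfl⟩ ⟨g2, hg2, h2, hp2, rfl⟩
    refine ⟨g1 * g2, Y.mul_mem hg1 hg2, fun j => h1 j * h2 j, by simpa using qp_mul hp1 hp2, rfl⟩
  inv_mem' := by
    rintro a ⟨g1, hg1, h1, hp1, rfl⟩
    exact ⟨g1⁻¹, Y.inv_mem hg1, fun j => (h1 j)⁻¹, by simpa using qp_inv hp1, rfl⟩

theorem indKSub_le_indQ {Y : Subgroup (Perm (VA p d m))} (hYX : Y ≤ X) {i : Fin m}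
    {π : Perm (QA p d)} (hπ : π ∈ indK (Y : Set (Perm (VA p d m))) i) :
    π ∈ indQ (X : Set (Perm (VA p d m))) i := by
  obtain ⟨g, hg, h, hp, rfl⟩ := hπ
  exact ⟨g, hYX hg, h, 1, hp, rfl, rfl⟩

/-- conjugation by an element of `indQ X i` preserves `indK Y i` when `Y` is `X`-conj-stable. -/
theorem indK_conj {Y : Subgroup (Perm (VA p d m))}
    (hconj : ∀ x ∈ X, ∀ n ∈ Y, x * n * x⁻¹ ∈ Y) {i : Fin m} {π κ : Perm (QA p d)}
    (hπ : π ∈ indQ (X : Set (Perm (VA p d m))) i)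
    (hκ : κ ∈ indK (Y : Set (Perm (VA p d m))) i) :
    π * κ * π⁻¹ ∈ indK (Y : Set (Perm (VA p d m))) i := by
  obtain ⟨x, hx, h, σ, hxp, hσ, rfl⟩ := hπ
  obtain ⟨g, hg, k, hgp, rfl⟩ := hκ
  refine ⟨x * g * x⁻¹, hconj x hx g hg, _, qp_conj hxp hgp, ?_⟩
  show h i * k (σ⁻¹ i) * (h i)⁻¹ = _
  have hiv : σ⁻¹ i = i := (Equiv.symm_apply_eq σ).mpr hσ.symm
  rw [hiv]

/-- a nontrivial conj-stable entrywise subgroup induces a nontrivial group on each entry. -/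
theorem indK_nontrivial {Y : Subgroup (Perm (VA p d m))}
    (hconj : ∀ x ∈ X, ∀ n ∈ Y, x * n * x⁻¹ ∈ Y)
    (hYK : (Y : Set (Perm (VA p d m))) ⊆ KSet (X : Set (Perm (VA p d m))))
    (hMtr : ∀ i j : Fin m, ∃ g ∈ (X : Set (Perm (VA p d m))), ∃ h σ, IsQAutPair g h σ ∧ σ i = j)
    {g₁ : Perm (VA p d m)} (hg₁ : g₁ ∈ Y) (hg₁ne : g₁ ≠ 1) (i : Fin m) :
    ∃ κ ∈ indK (Y : Set (Perm (VA p d m))) i, κ ≠ 1 := by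
  obtain ⟨_, k, hkp⟩ := hYK hg₁
  have hex : ∃ i₀, k i₀ ≠ 1 := by
    by_contra hc
    push_neg at hc
    exact hg₁ne (qp_eq_one hkp hc)
  obtain ⟨i₀, hi₀⟩ := hex
  obtain ⟨x, hx, h, σ, hxp, hσ⟩ := hMtr i₀ i
  refine ⟨h i * k (σ⁻¹ i) * (h i)⁻¹, ⟨x * g₁ * x⁻¹, hconj x hx g₁ hg₁, _, qp_conj hxp hkp, rfl⟩, ?_⟩
  have hiv : σ⁻¹ i = i₀ := (Equiv.symm_apply_eq σ).mpr hσ.symm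
  rw [hiv]
  intro hc
  apply hi₀
  have : k i₀ = (h i)⁻¹ * 1 * (h i) := by
    rw [← hc]; group
  simpa using this

theorem indK_mulY {Y : Subgroup (Perm (VA p d m))} {i : Fin m} {a b : Perm (QA p d)}
    (ha : a ∈ indK (Y : Set (Perm (VA p d m))) i) (hb : b ∈ indK (Y : Set (Perm (VA p d m))) i) :
    a * b ∈ indK (Y : Set (Perm (VA p d m))) i := by
  obtain ⟨g1, hg1, h1, hp1, rfl⟩ := ha
  obtain ⟨g2, hg2, h2, hp2, rfl⟩ := hb
  exact ⟨g1 * g2, Y.mul_mem hg1 hg2, fun j => h1 j * h2 j, by simpa using qp_mul hp1 hp2, rfl⟩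

theorem indK_invY {Y : Subgroup (Perm (VA p d m))} {i : Fin m} {a : Perm (QA p d)}
    (ha : a ∈ indK (Y : Set (Perm (VA p d m))) i) :
    a⁻¹ ∈ indK (Y : Set (Perm (VA p d m))) i := by
  obtain ⟨g1, hg1, h1, hp1, rfl⟩ := ha
  exact ⟨g1⁻¹, Y.inv_mem hg1, fun j => (h1 j)⁻¹, by simpa using qp_inv hp1, rfl⟩

theorem indK_oneY {Y : Subgroup (Perm (VA p d m))} {i : Fin m} :
    (1 : Perm (QA p d)) ∈ indK (Y : Set (Perm (VA p d m))) i :=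
  ⟨1, Y.one_mem, fun _ => 1, qp_one, rfl⟩

theorem trans_spread {i : Fin m} {S : Set (Perm (QA p d))}
    (hconjS : ∀ π ∈ indQ (X : Set (Perm (VA p d m))) i, ∀ κ ∈ S, π * κ * π⁻¹ ∈ S)
    (h2t : ∀ a b a' b' : QA p d, a ≠ b → a' ≠ b' →
      ∃ π ∈ indQ (X : Set (Perm (VA p d m))) i, π a = a' ∧ π b = b')
    (hnm : ∀ π ∈ indQ (X : Set (Perm (VA p d m))) i,
      ∀ t ∈ TransSub (QA p d), π * t * π⁻¹ ∈ TransSub (QA p d))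
    (h1S : (1 : Perm (QA p d)) ∈ S)
    {κ₀ : Perm (QA p d)} (hκ₀S : κ₀ ∈ S) (hκ₀T : κ₀ ∈ TransSub (QA p d)) (hκ₀ne : κ₀ ≠ 1) :
    ∀ f : QA p d, ∃ κ ∈ S, κ ∈ TransSub (QA p d) ∧ ∀ v, κ v = v + f := by
  have he : κ₀ 0 ≠ 0 := by
    intro hc
    apply hκ₀ne
    apply Equiv.ext
    intro v
    rw [transSub_apply hκ₀T v, hc, add_zero]
    rfl
  intro f
  by_cases hf : f = 0
  · refine ⟨1, h1S, one_mem _, fun v => by simp [hf]⟩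
  · obtain ⟨π, hπ, hπ0, hπe⟩ := h2t 0 (κ₀ 0) 0 f (Ne.symm he) (Ne.symm hf)
    refine ⟨π * κ₀ * π⁻¹, hconjS π hπ κ₀ hκ₀S, hnm π hπ κ₀ hκ₀T, fun v => ?_⟩
    have haff : IsAff π := isAff_of_norm (fun t ht => hnm π hπ t ht)
    have e1 : (π * κ₀ * π⁻¹) v = π (π⁻¹ v + κ₀ 0) := by
      rw [Perm.mul_apply, Perm.mul_apply, transSub_apply hκ₀T]
    rw [e1, haff (π⁻¹ v) (κ₀ 0), π.apply_inv_self]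
    congr 1
    rw [linA, hπe, hπ0, sub_zero]

theorem exists_trans_indK {Y : Subgroup (Perm (VA p d m))}
    (hconj : ∀ x ∈ X, ∀ n ∈ Y, x * n * x⁻¹ ∈ Y)
    (hYK : (Y : Set (Perm (VA p d m))) ⊆ KSet (X : Set (Perm (VA p d m))))
    (hYX : Y ≤ X)
    (hMtr : ∀ i j : Fin m, ∃ g ∈ (X : Set (Perm (VA p d m))), ∃ h σ, IsQAutPair g h σ ∧ σ i = j)
    (h2t : ∀ i : Fin m, ∀ a b a' b' : QA p d, a ≠ b → a' ≠ b' →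
      ∃ π ∈ indQ (X : Set (Perm (VA p d m))) i, π a = a' ∧ π b = b')
    (hnm : ∀ i : Fin m, ∀ π ∈ indQ (X : Set (Perm (VA p d m))) i,
      ∀ t ∈ TransSub (QA p d), π * t * π⁻¹ ∈ TransSub (QA p d))
    (htr : ∀ i : Fin m, (TransSub (QA p d) : Set (Perm (QA p d))) ⊆ indQ (X : Set (Perm (VA p d m))) i)
    {g₁ : Perm (VA p d m)} (hg₁ : g₁ ∈ Y) (hg₁ne : g₁ ≠ 1) (i : Fin m) :
    ∀ f : QA p d, ∃ κ ∈ indK (Y : Set (Perm (VA p d m))) i,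
      κ ∈ TransSub (QA p d) ∧ ∀ v, κ v = v + f := by
  obtain ⟨κ, hκ, hκne⟩ := indK_nontrivial hconj hYK hMtr hg₁ hg₁ne i
  have hSconj := fun π hπ κ' hκ' => indK_conj (Y := Y) hconj (i := i) (π := π) (κ := κ') hπ hκ'
  by_cases hc : ∀ a v, κ (v + a) = κ v + a
  · exact trans_spread hSconj (h2t i) (hnm i) indK_oneY hκ (transSub_of_comm hc) hκne
  · push_neg at hc
    obtain ⟨a, v, hav⟩ := hc
    have hτT : Equiv.addRight a ∈ TransSub (QA p d) := addRight_mem_TransSub a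
    have hτQ : Equiv.addRight a ∈ indQ (X : Set (Perm (VA p d m))) i := htr i hτT
    have hκQ : κ ∈ indQ (X : Set (Perm (VA p d m))) i := indKSub_le_indQ hYX hκ
    set τ := Equiv.addRight a with hτ
    have hcT : κ * τ * κ⁻¹ * τ⁻¹ ∈ TransSub (QA p d) :=
      mul_mem (hnm i κ hκQ τ hτT) (inv_mem hτT)
    have hcK : κ * τ * κ⁻¹ * τ⁻¹ ∈ indK (Y : Set (Perm (VA p d m))) i := by
      have h2 : τ * κ⁻¹ * τ⁻¹ ∈ indK (Y : Set (Perm (VA p d m))) i :=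
        indK_conj hconj hτQ (indK_invY hκ)
      have e : κ * τ * κ⁻¹ * τ⁻¹ = κ * (τ * κ⁻¹ * τ⁻¹) := by group
      rw [e]
      exact indK_mulY hκ h2
    have hcne : κ * τ * κ⁻¹ * τ⁻¹ ≠ 1 := by
      intro h1
      have h2 : κ * τ * κ⁻¹ = τ := mul_inv_eq_one.mp h1
      have h3 : κ * τ = τ * κ := by
        have h2' := congrArg (fun z => z * κ) h2
        simpa [mul_assoc] using h2'
      have h4 := congrArg (fun σ : Perm (QA p d) => σ v) h3
      simp only [Perm.mul_apply] at h4
      apply hav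
      have hτv : τ v = v + a := rfl
      have hτκv : τ (κ v) = κ v + a := rfl
      rw [hτv] at h4
      rw [hτκv] at h4
      exact h4
    exact trans_spread hSconj (h2t i) (hnm i) indK_oneY hcK hcT hcne

theorem qp_comm {g u : Perm (VA p d m)} {h k : Fin m → Perm (QA p d)}
    (hg : IsQAutPair g h 1) (hu : IsQAutPair u k 1) :
    IsQAutPair (g * u * g⁻¹ * u⁻¹) (fun j => h j * k j * (h j)⁻¹ * (k j)⁻¹) 1 := by
  have h1 := qp_mul (qp_mul (qp_mul hg hu) (qp_inv hg)) (qp_inv hu)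
  simpa using h1

theorem isPGroup_indKSub {Y : Subgroup (Perm (VA p d m))}
    (hY : (Y : Set (Perm (VA p d m))) ⊆ {g | ∃ h, IsQAutPair g h 1})
    (hpY : IsPGroup p Y) (i : Fin m) : IsPGroup p (indKSub Y hY i) := by
  rintro ⟨π, hπ⟩
  obtain ⟨g, hg, h, hp, hcomp⟩ := hπ
  obtain ⟨k, hk⟩ := hpY ⟨g, hg⟩
  refine ⟨k, ?_⟩
  have hg1 : g ^ p ^ k = 1 := by
    have := congrArg (Subtype.val) hk
    simpa using this
  have hpow := qp_pow hp (p ^ k)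
  rw [hg1] at hpow
  have hhi : (h i) ^ p ^ k = 1 := by
    have := qp_unique hpow qp_one i
    simpa using this
  apply Subtype.ext
  have : ((⟨π, ⟨g, hg, h, hp, hcomp⟩⟩ : indKSub Y hY i) ^ p ^ k : indKSub Y hY i).val = π ^ p ^ k := by
    simp
  rw [this, ← hcomp, hhi]
  rfl

theorem exists_glob_trans
    (hQA : ∀ g ∈ (X : Set (Perm (VA p d m))), IsQAut g)
    (hKne : ∃ g ∈ KSet (X : Set (Perm (VA p d m))), g ≠ 1)
    (hMtr : ∀ i j : Fin m, ∃ g ∈ (X : Set (Perm (VA p d m))), ∃ h σ, IsQAutPair g h σ ∧ σ i = j)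
    (h2t : ∀ i : Fin m, ∀ a b a' b' : QA p d, a ≠ b → a' ≠ b' →
      ∃ π ∈ indQ (X : Set (Perm (VA p d m))) i, π a = a' ∧ π b = b')
    (hnm : ∀ i : Fin m, ∀ π ∈ indQ (X : Set (Perm (VA p d m))) i,
      ∀ t ∈ TransSub (QA p d), π * t * π⁻¹ ∈ TransSub (QA p d))
    (htr : ∀ i : Fin m, (TransSub (QA p d) : Set (Perm (QA p d))) ⊆ indQ (X : Set (Perm (VA p d m))) i) :
    ∃ g h, g ∈ KSet (X : Set (Perm (VA p d m))) ∧ g ≠ 1 ∧ IsQAutPair g h 1 ∧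
      ∀ i : Fin m, h i ∈ TransSub (QA p d) := by
  classical
  -- the subgroup K
  let K : Subgroup (Perm (VA p d m)) :=
    { carrier := KSet (X : Set (Perm (VA p d m)))
      one_mem' := ks_one
      mul_mem' := fun ha hb => ks_mul ha hb
      inv_mem' := fun ha => ks_inv ha }
  have hKconj : ∀ x ∈ X, ∀ n ∈ K, x * n * x⁻¹ ∈ K := by
    intro x hx n hn
    exact ks_conj hx (hQA x hx) hn
  have hKK : (K : Set (Perm (VA p d m))) ⊆ KSet (X : Set (Perm (VA p d m))) := fun g hg => hg
  have hKX : K ≤ X := fun g hg => hg.1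
  obtain ⟨g₁, hg₁, hg₁ne⟩ := hKne
  suffices H : ∀ k : ℕ, ∃ g h, g ∈ KSet (X : Set (Perm (VA p d m))) ∧ g ≠ 1 ∧ IsQAutPair g h 1 ∧
      ∀ i : Fin m, i.val < k → h i ∈ TransSub (QA p d) by
    obtain ⟨g, h, h1, h2, h3, h4⟩ := H m
    exact ⟨g, h, h1, h2, h3, fun i => h4 i i.isLt⟩
  intro k
  induction k with
  | zero =>
      obtain ⟨hgX, h, hp⟩ := hg₁
      exact ⟨g₁, h, ⟨hgX, h, hp⟩, hg₁ne, hp, fun i hi => absurd hi (Nat.not_lt_zero _)⟩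
  | succ k ih =>
      obtain ⟨g, h, hgK, hgne, hp, htl⟩ := ih
      by_cases hkm : k < m
      · set i : Fin m := ⟨k, hkm⟩ with hidef
        by_cases hC : ∀ a v, h i (v + a) = h i v + a
        · refine ⟨g, h, hgK, hgne, hp, fun j hj => ?_⟩
          rcases Nat.lt_succ_iff_lt_or_eq.mp hj with h' | h'
          · exact htl j h'
          · have : j = i := Fin.ext h'
            rw [this]
            exact transSub_of_comm hC
        · push_neg at hC
          obtain ⟨a, v, hav⟩ := hC
          obtain ⟨κu, hκu, hκuT, hκuv⟩ :=
            exists_trans_indK (Y := K) hKconj hKK hKX hMtr h2t hnm htr hg₁ hg₁ne i a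
          obtain ⟨u, huK, k', hup, hk'i⟩ := hκu
          have huK' : u ∈ KSet (X : Set (Perm (VA p d m))) := huK
          refine ⟨g * u * g⁻¹ * u⁻¹, fun j => h j * k' j * (h j)⁻¹ * (k' j)⁻¹,
            ks_mul (ks_mul (ks_mul hgK huK') (ks_inv hgK)) (ks_inv huK'),
            ?_, qp_comm hp hup, fun j hj => ?_⟩
          · -- nontrivial : component at i is ≠ 1
            intro h1
            have hcomp := qp_unique (qp_comm hp hup) (by rw [h1]; exact qp_one) i
            have h2 : h i * k' i * (h i)⁻¹ = k' i := by
              have := mul_inv_eq_one.mp hcomp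
              exact this
            have h3 : h i * k' i = k' i * h i := by
              have h2' := congrArg (fun z => z * h i) h2
              simpa [mul_assoc] using h2'
            have h4 := congrArg (fun σ : Perm (QA p d) => σ v) h3
            simp only [Perm.mul_apply] at h4
            apply hav
            rw [hk'i] at h4
            rw [hκuv v] at h4
            rw [h4, hκuv (h i v)]
          · -- components are translations
            rcases Nat.lt_succ_iff_lt_or_eq.mp hj with h' | h'
            · -- j < k : h j ∈ Trans, conjugation-part in Trans
              have hhj : h j ∈ TransSub (QA p d) := htl j h'
              have hk'Q : k' j ∈ indQ (X : Set (Perm (VA p d m))) j :=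
                ⟨u, huK'.1, k', 1, hup, rfl, rfl⟩
              have e : h j * k' j * (h j)⁻¹ * (k' j)⁻¹ = h j * (k' j * (h j)⁻¹ * (k' j)⁻¹) := by
                group
              show h j * k' j * (h j)⁻¹ * (k' j)⁻¹ ∈ TransSub (QA p d)
              rw [e]
              refine mul_mem hhj ?_
              have := hnm j (k' j) hk'Q ((h j)⁻¹) (inv_mem hhj)
              simpa [mul_assoc] using this
            · have hji : j = i := Fin.ext h'
              show h j * k' j * (h j)⁻¹ * (k' j)⁻¹ ∈ TransSub (QA p d)
              rw [hji]
              have hhjQ : h i ∈ indQ (X : Set (Perm (VA p d m))) i :=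
                ⟨g, hgK.1, h, 1, hp, rfl, rfl⟩
              have hk'T : k' i ∈ TransSub (QA p d) := by rw [hk'i]; exact hκuT
              exact mul_mem (hnm i (h i) hhjQ (k' i) hk'T) (inv_mem hk'T)
      · refine ⟨g, h, hgK, hgne, hp, fun j hj => ?_⟩
        exact htl j (lt_of_lt_of_le j.isLt (le_of_not_gt hkm))

theorem indK_le_trans {Y : Subgroup (Perm (VA p d m))}
    (hp : p.Prime) (hd : 1 ≤ d)
    (hY : (Y : Set (Perm (VA p d m))) ⊆ {g | ∃ h, IsQAutPair g h 1})
    (hconj : ∀ x ∈ X, ∀ n ∈ Y, x * n * x⁻¹ ∈ Y)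
    (hYX : Y ≤ X) (hpY : IsPGroup p Y)
    (h2t : ∀ i : Fin m, ∀ a b a' b' : QA p d, a ≠ b → a' ≠ b' →
      ∃ π ∈ indQ (X : Set (Perm (VA p d m))) i, π a = a' ∧ π b = b')
    (hnm : ∀ i : Fin m, ∀ π ∈ indQ (X : Set (Perm (VA p d m))) i,
      ∀ t ∈ TransSub (QA p d), π * t * π⁻¹ ∈ TransSub (QA p d))
    (i : Fin m) :
    ∀ κ ∈ indK (Y : Set (Perm (VA p d m))) i, κ ∈ TransSub (QA p d) := by
  classical
  haveI : Fact p.Prime := ⟨hp⟩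
  haveI : NeZero p := ⟨hp.pos.ne'⟩
  have haff : ∀ κ ∈ indK (Y : Set (Perm (VA p d m))) i, IsAff κ := fun κ hκ =>
    isAff_of_norm (fun t ht => hnm i κ (indKSub_le_indQ hYX hκ) t ht)
  set G := indKSub Y hY i with hG
  have hPG : IsPGroup p G := isPGroup_indKSub hY hpY i
  letI : SMul G {a : QA p d // a ≠ 0} :=
    ⟨fun π a => ⟨linA π.1 a.1, linA_ne_zero a.2⟩⟩
  have smul_def : ∀ (π : G) (a : {a : QA p d // a ≠ 0}), (π • a).1 = linA π.1 a.1 :=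
    fun _ _ => rfl
  letI : MulAction G {a : QA p d // a ≠ 0} :=
    { one_smul := fun a => Subtype.ext (linA_one a.1)
      mul_smul := fun x y a => Subtype.ext (by
        have := linA_mul (haff x.1 x.2) (haff y.1 y.2) a.1
        exact this) }
  have hcard : ¬ p ∣ Nat.card {a : QA p d // a ≠ 0} := by
    have h1 : Nat.card {a : QA p d // a ≠ 0} = p ^ d - 1 := by
      rw [Nat.card_eq_fintype_card, Fintype.card_subtype_compl,
        Fintype.card_subtype_eq, Fintype.card_fun, ZMod.card, Fintype.card_fin]
    rw [h1]
    intro hdvd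
    have h2 : p ∣ p ^ d := dvd_pow_self p (Nat.one_le_iff_ne_zero.mp hd)
    have h3 : p ∣ p ^ d - (p ^ d - 1) := Nat.dvd_sub h2 hdvd
    have h4 : p ^ d - (p ^ d - 1) = 1 := by
      have : 1 ≤ p ^ d := Nat.one_le_pow _ _ hp.pos
      omega
    rw [h4] at h3
    exact hp.one_lt.ne' (Nat.dvd_one.mp h3)
  obtain ⟨a₀, ha₀⟩ := hPG.nonempty_fixed_point_of_prime_not_dvd_card _ hcard
  rw [MulAction.mem_fixedPoints] at ha₀
  intro κ hκ
  have affκ : IsAff κ := haff κ hκ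
  have hlin : ∀ b, linA κ b = b := by
    intro b
    by_cases hb : b = 0
    · rw [hb]; exact linA_zero κ
    · obtain ⟨π, hπQ, hπ0, hπa⟩ := h2t i 0 a₀.1 0 b (Ne.symm a₀.2) (Ne.symm hb)
      have affπ : IsAff π := isAff_of_norm (fun t ht => hnm i π hπQ t ht)
      have hκ'mem : π⁻¹ * κ * π ∈ indK (Y : Set (Perm (VA p d m))) i := by
        have := indK_conj hconj (indQ_inv hπQ) hκ
        rwa [inv_inv] at this
      have affκ' : IsAff (π⁻¹ * κ * π) := haff _ hκ'mem
      have hfix : linA (π⁻¹ * κ * π) a₀.1 = a₀.1 :=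
        congrArg Subtype.val (ha₀ ⟨π⁻¹ * κ * π, hκ'mem⟩)
      have hlin_b : linA π a₀.1 = b := by rw [linA, hπa, hπ0, sub_zero]
      have hmul : κ * π = π * (π⁻¹ * κ * π) := by group
      calc linA κ b = linA κ (linA π a₀.1) := by rw [hlin_b]
        _ = linA (κ * π) a₀.1 := (linA_mul affκ affπ _).symm
        _ = linA (π * (π⁻¹ * κ * π)) a₀.1 := by rw [hmul]
        _ = linA π (linA (π⁻¹ * κ * π) a₀.1) := linA_mul affπ affκ' _
        _ = linA π a₀.1 := by rw [hfix]
        _ = b := hlin_b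
  exact transSub_of_linA_id affκ hlin

theorem exists_trans_indK_of_le_trans {Y : Subgroup (Perm (VA p d m))}
    (hconj : ∀ x ∈ X, ∀ n ∈ Y, x * n * x⁻¹ ∈ Y)
    (hYK : (Y : Set (Perm (VA p d m))) ⊆ KSet (X : Set (Perm (VA p d m))))
    (hMtr : ∀ i j : Fin m, ∃ g ∈ (X : Set (Perm (VA p d m))), ∃ h σ, IsQAutPair g h σ ∧ σ i = j)
    (h2t : ∀ i : Fin m, ∀ a b a' b' : QA p d, a ≠ b → a' ≠ b' →
      ∃ π ∈ indQ (X : Set (Perm (VA p d m))) i, π a = a' ∧ π b = b')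
    (hnm : ∀ i : Fin m, ∀ π ∈ indQ (X : Set (Perm (VA p d m))) i,
      ∀ t ∈ TransSub (QA p d), π * t * π⁻¹ ∈ TransSub (QA p d))
    {g₁ : Perm (VA p d m)} (hg₁ : g₁ ∈ Y) (hg₁ne : g₁ ≠ 1) (i : Fin m)
    (hle : ∀ κ ∈ indK (Y : Set (Perm (VA p d m))) i, κ ∈ TransSub (QA p d)) :
    ∀ f : QA p d, ∃ κ ∈ indK (Y : Set (Perm (VA p d m))) i, ∀ v, κ v = v + f := by
  obtain ⟨κ₁, hκ₁, hκ₁ne⟩ := indK_nontrivial hconj hYK hMtr hg₁ hg₁ne i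
  have hSconj := fun π hπ κ' hκ' => indK_conj (Y := Y) hconj (i := i) (π := π) (κ := κ') hπ hκ'
  intro f
  obtain ⟨κ, hκ, _, hκv⟩ :=
    trans_spread hSconj (h2t i) (hnm i) indK_oneY hκ₁ (hle κ₁ hκ₁) hκ₁ne f
  exact ⟨κ, hκ, hκv⟩

end Groups

section Helpers

theorem conj_pow_grp {G : Type*} [Group G] (x y : G) (n : ℕ) :
    (x⁻¹ * y * x) ^ n = x⁻¹ * y ^ n * x := by
  induction n with
  | zero => group
  | succ n ih => rw [pow_succ, ih, pow_succ]; group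

theorem trans_pow {A : Type*} [AddCommGroup A] {g : Perm A} {α : A}
    (hg : ∀ v, g v = v + α) (n : ℕ) : ∀ v, (g ^ n) v = v + n • α := by
  induction n with
  | zero => intro v; simp
  | succ n ih =>
      intro v
      rw [pow_succ', Perm.mul_apply, hg, ih, succ_nsmul]
      abel

theorem psmul_zero_QA {p d m : ℕ} (hp : p.Prime) (α : VA p d m) : p • α = 0 := by
  funext i j
  show p • (α i j) = 0
  rw [nsmul_eq_mul, ZMod.natCast_self, zero_mul]

theorem perm_image_of_invariant {V : Type*} {g : Perm V} {S : Set V}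
    (h1 : ∀ s ∈ S, g s ∈ S) (h2 : ∀ s ∈ S, g⁻¹ s ∈ S) : g '' S = S := by
  apply Set.Subset.antisymm
  · rintro _ ⟨s, hs, rfl⟩
    exact h1 s hs
  · intro s hs
    exact ⟨g⁻¹ s, h2 s hs, g.apply_inv_self s⟩

theorem perm_image_mul {V : Type*} (g h : Perm V) (S : Set V) :
    (g * h) '' S = g '' (h '' S) := by
  rw [show ⇑(g * h) = ⇑g ∘ ⇑h from rfl, Set.image_comp]

theorem perm_inv_image {V : Type*} {g : Perm V} {S : Set V} (h : g '' S = S) :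
    (g⁻¹ : Perm V) '' S = S := by
  conv_lhs => rw [← h]
  rw [← perm_image_mul g⁻¹ g S]
  simp

theorem addRight_inv_apply {A : Type*} [AddCommGroup A] (α v : A) :
    (Equiv.addRight α)⁻¹ v = v - α := by
  apply (Equiv.addRight α).injective
  rw [Perm.apply_inv_self]
  simp

section SetIndQ
variable {p d m : ℕ}

theorem indQ_mulS {S : Set (Perm (VA p d m))}
    (hmul : ∀ a ∈ S, ∀ b ∈ S, a * b ∈ S) {i : Fin m} {π₁ π₂ : Perm (QA p d)}
    (h1 : π₁ ∈ indQ S i) (h2 : π₂ ∈ indQ S i) : π₁ * π₂ ∈ indQ S i := by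
  obtain ⟨x1, hx1, h1f, σ1, hp1, hσ1, hc1⟩ := h1
  obtain ⟨x2, hx2, h2f, σ2, hp2, hσ2, hc2⟩ := h2
  refine ⟨x1 * x2, hmul _ hx1 _ hx2, _, σ1 * σ2, qp_mul hp1 hp2, ?_, ?_⟩
  · show σ1 (σ2 i) = i
    rw [hσ2, hσ1]
  · show h1f i * h2f (σ1⁻¹ i) = π₁ * π₂
    have hiv : σ1⁻¹ i = i := (Equiv.symm_apply_eq σ1).mpr hσ1.symm
    rw [hiv, hc1, hc2]

end SetIndQ

end Helpers

section CodeLemmas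
variable {p d m : ℕ} {X : Subgroup (Perm (VA p d m))} {C W : Set (VA p d m)}

theorem distSetW_le (hWC : W ⊆ C)
    (hδ : ∀ u ∈ C, ∀ v ∈ C, u ≠ v → 5 ≤ hammingDist u v)
    {j : ℕ} (hj : j ≤ 2) {u : VA p d m} (hu : u ∈ distSet W j) : u ∈ distSet C j := by
  obtain ⟨⟨w, hw, hwd⟩, hmin⟩ := hu
  refine ⟨⟨w, hWC hw, hwd⟩, ?_⟩
  intro c hc
  by_contra hlt
  push_neg at hlt
  have hne : c ≠ w := by
    intro he
    rw [he, hwd] at hlt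
    exact lt_irrefl _ hlt
  have h5 : 5 ≤ hammingDist w c := hδ w (hWC hw) c hc hne.symm
  have htri : hammingDist w c ≤ hammingDist w u + hammingDist u c := hammingDist_triangle _ _ _
  have h1 : hammingDist w u = j := by rw [hammingDist_comm]; exact hwd
  omega

theorem distSet_translate
    (hWadd : ∀ a ∈ W, ∀ b ∈ W, a + b ∈ W) (hWneg : ∀ a ∈ W, -a ∈ W)
    {α : VA p d m} (hα : α ∈ W) {j : ℕ} {u : VA p d m} (hu : u ∈ distSet W j) :
    u + α ∈ distSet W j := by
  obtain ⟨⟨w, hw, hwd⟩, hmin⟩ := hu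
  constructor
  · exact ⟨w + α, hWadd w hw α hα, by rw [hd_add_right]; exact hwd⟩
  · intro c hc
    have hcα : c + -α ∈ W := hWadd c hc _ (hWneg α hα)
    have := hmin _ hcα
    have he : hammingDist (u + α) c = hammingDist u (c + -α) := by
      rw [← hd_add_right u (c + -α) α]
      congr 1
      abel
    rw [he]
    exact this

theorem stab0_move
    (hQA : ∀ g ∈ (X : Set (Perm (VA p d m))), IsQAut g)
    (hImg : ∀ g ∈ (X : Set (Perm (VA p d m))), g '' C = C)
    (hNT : NbrTrans (X : Set (Perm (VA p d m))) C 2)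
    (hδ : ∀ u ∈ C, ∀ v ∈ C, u ≠ v → 5 ≤ hammingDist u v)
    (h0 : (0 : VA p d m) ∈ C)
    (i j : Fin m) (a a' : QA p d) (ha : a ≠ 0) (ha' : a' ≠ 0) :
    ∃ x ∈ (X : Set (Perm (VA p d m))), x 0 = 0 ∧ ∃ h σ, IsQAutPair x h σ ∧ σ i = j ∧
      h j a = a' ∧ ∀ l, h l 0 = 0 := by
  classical
  set u : VA p d m := Function.update (0 : VA p d m) i a with hu
  set v : VA p d m := Function.update (0 : VA p d m) j a' with hv
  have hw1 : ∀ (k : Fin m) (b : QA p d), b ≠ 0 →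
      hammingDist (Function.update (0 : VA p d m) k b) 0 = 1 := by
    intro k b hb
    show (Finset.univ.filter fun l => Function.update (0 : VA p d m) k b l ≠ (0 : VA p d m) l).card = 1
    have : (Finset.univ.filter fun l => Function.update (0 : VA p d m) k b l ≠ (0 : VA p d m) l)
        = {k} := by
      ext l
      simp only [Finset.mem_filter, Finset.mem_univ, true_and, Finset.mem_singleton,
        Function.update_apply]
      constructor
      · intro hne
        by_contra hlk
        simp [hlk] at hne
      · intro hlk
        simp [hlk, hb]
    rw [this, Finset.card_singleton]
  have humem : ∀ (k : Fin m) (b : QA p d), b ≠ 0 →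
      Function.update (0 : VA p d m) k b ∈ distSet C 1 := by
    intro k b hb
    refine ⟨⟨0, h0, hw1 k b hb⟩, ?_⟩
    intro c hc
    rw [Nat.one_le_iff_ne_zero]
    intro h0d
    have : Function.update (0 : VA p d m) k b = c := eq_of_hammingDist_eq_zero h0d
    subst this
    have hne : Function.update (0 : VA p d m) k b ≠ 0 := by
      intro he
      have := congrFun he k
      rw [Function.update_self] at this
      exact hb this
    have := hδ _ hc 0 h0 hne
    rw [hw1 k b hb] at this
    omega
  obtain ⟨g, hgX, hgu⟩ := hNT 1 (by omega) u (humem i a ha) v (humem j a' ha')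
  obtain ⟨h, σ, hpair⟩ := hQA g hgX
  have hg0C : g 0 ∈ C := by
    rw [← hImg g hgX]
    exact Set.mem_image_of_mem _ h0
  have hg0 : g (0 : VA p d m) = 0 := by
    by_contra hne
    have h5 : 5 ≤ hammingDist (0 : VA p d m) (g 0) := hδ 0 h0 (g 0) hg0C (Ne.symm hne)
    have htri : hammingDist (0 : VA p d m) (g 0) ≤
        hammingDist (0 : VA p d m) v + hammingDist v (g 0) := hammingDist_triangle _ _ _
    have h1 : hammingDist (0 : VA p d m) v = 1 := by
      rw [hammingDist_comm]; exact hw1 j a' ha'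
    have h2 : hammingDist v (g 0) = 1 := by
      rw [← hgu, qa_dist hpair]
      exact hw1 i a ha
    omega
  have hl0 : ∀ l, h l 0 = 0 := by
    intro l
    have := hpair (0 : VA p d m) l
    rw [hg0] at this
    exact this.symm
  have hinj0 : ∀ (l : Fin m) (b : QA p d), b ≠ 0 → h l b ≠ 0 := by
    intro l b hb hc
    apply hb
    apply (h l).injective
    rw [hc, hl0]
  have hσ : σ i = j := by
    have hvi := hpair u (σ i)
    rw [hgu] at hvi
    rw [σ.symm_apply_apply] at hvi
    have hui : u i = a := Function.update_self _ _ _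
    rw [hui] at hvi
    by_contra hne
    have : v (σ i) = 0 := by
      rw [hv, Function.update_apply, if_neg hne]
      rfl
    rw [this] at hvi
    exact hinj0 (σ i) a ha hvi.symm
  have hja : h j a = a' := by
    have hvj := hpair u j
    rw [hgu] at hvj
    have hsymm : σ.symm j = i := by rw [← hσ, σ.symm_apply_apply]
    rw [hsymm] at hvj
    have hui : u i = a := Function.update_self _ _ _
    rw [hui] at hvj
    have hvjv : v j = a' := Function.update_self _ _ _
    rw [hvjv] at hvj
    exact hvj.symm
  exact ⟨g, hgX, hg0, h, σ, hpair, hσ, hja, hl0⟩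

end CodeLemmas

section NbrW
variable {p d m : ℕ} {X : Subgroup (Perm (VA p d m))} {C W : Set (VA p d m)}

theorem nbrW
    (hQA : ∀ g ∈ (X : Set (Perm (VA p d m))), IsQAut g)
    (hImg : ∀ g ∈ (X : Set (Perm (VA p d m))), g '' C = C)
    (hNT : NbrTrans (X : Set (Perm (VA p d m))) C 2)
    (hδ : ∀ u ∈ C, ∀ v ∈ C, u ≠ v → 5 ≤ hammingDist u v)
    (h0 : (0 : VA p d m) ∈ C)
    (hWC : W ⊆ C)
    (hWadd : ∀ a ∈ W, ∀ b ∈ W, a + b ∈ W) (hWneg : ∀ a ∈ W, -a ∈ W)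
    (haddX : ∀ α ∈ W, Equiv.addRight α ∈ X)
    (hX0W : ∀ x ∈ (X : Set (Perm (VA p d m))), x 0 = 0 → x '' W = W) :
    NbrTrans {x : Perm (VA p d m) | x ∈ X ∧ x '' W = W} W 2 := by
  classical
  have haddW : ∀ α ∈ W, (Equiv.addRight α) '' W = W := by
    intro α hα
    apply perm_image_of_invariant
    · intro s hs
      exact hWadd s hs α hα
    · intro s hs
      rw [addRight_inv_apply, sub_eq_add_neg]
      exact hWadd s hs _ (hWneg α hα)
  intro j hj u hu v hv
  obtain ⟨⟨wu, hwu, hwud⟩, humin⟩ := id hu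
  obtain ⟨⟨wv, hwv, hwvd⟩, hvmin⟩ := id hv
  have hu' : u + -wu ∈ distSet W j := distSet_translate hWadd hWneg (hWneg _ hwu) hu
  have hv' : v + -wv ∈ distSet W j := distSet_translate hWadd hWneg (hWneg _ hwv) hv
  have hu'C : u + -wu ∈ distSet C j := distSetW_le hWC hδ hj hu'
  have hv'C : v + -wv ∈ distSet C j := distSetW_le hWC hδ hj hv'
  obtain ⟨g, hgX, hguv⟩ := hNT j hj _ hu'C _ hv'C
  obtain ⟨h, σ, hpair⟩ := hQA g hgX
  have hdu'0 : hammingDist (u + -wu) (0 : VA p d m) = j := by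
    rw [show (0 : VA p d m) = wu + -wu by abel, hd_add_right]
    exact hwud
  have hdv'0 : hammingDist (v + -wv) (0 : VA p d m) = j := by
    rw [show (0 : VA p d m) = wv + -wv by abel, hd_add_right]
    exact hwvd
  have hg0C : g 0 ∈ C := by
    rw [← hImg g hgX]
    exact Set.mem_image_of_mem _ h0
  have hg0 : g (0 : VA p d m) = 0 := by
    by_contra hne
    have h5 : 5 ≤ hammingDist (0 : VA p d m) (g 0) := hδ 0 h0 (g 0) hg0C (Ne.symm hne)
    have htri : hammingDist (0 : VA p d m) (g 0) ≤
        hammingDist (0 : VA p d m) (v + -wv) + hammingDist (v + -wv) (g 0) :=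
      hammingDist_triangle _ _ _
    have h1 : hammingDist (0 : VA p d m) (v + -wv) = j := by
      rw [hammingDist_comm]; exact hdv'0
    have h2 : hammingDist (v + -wv) (g 0) = j := by
      rw [← hguv, qa_dist hpair]
      exact hdu'0
    omega
  refine ⟨Equiv.addRight wv * g * (Equiv.addRight wu)⁻¹, ⟨?_, ?_⟩, ?_⟩
  · exact X.mul_mem (X.mul_mem (haddX wv hwv) hgX) (X.inv_mem (haddX wu hwu))
  · rw [perm_image_mul, perm_image_mul, perm_inv_image (haddW wu hwu),
      hX0W g hgX hg0, haddW wv hwv]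
  · rw [Perm.mul_apply, Perm.mul_apply, addRight_inv_apply, sub_eq_add_neg, hguv]
    show v + -wv + wv = v
    abel

end NbrW

theorem stmt5 (p d m : ℕ) (hp : p.Prime) (hd : 1 ≤ d)
    (C : Set (VA p d m)) (X : Subgroup (Perm (VA p d m)))
    (hAff : AlphabetAffine (X : Set (Perm (VA p d m))) C)
    (hNT : NbrTrans (X : Set (Perm (VA p d m))) C 2)
    (hδ : ∀ u ∈ C, ∀ v ∈ C, u ≠ v → 5 ≤ hammingDist u v)
    (h0 : (0 : VA p d m) ∈ C)
    -- `N = O_p(K)`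
    (N : Subgroup (Perm (VA p d m)))
    (hN1 : (N : Set (Perm (VA p d m))) ⊆ KSet (X : Set (Perm (VA p d m))))
    (hN2 : IsPGroup p N)
    (hN3 : ∀ g ∈ KSet (X : Set (Perm (VA p d m))), ∀ t ∈ N, g * t * g⁻¹ ∈ N)
    (hN4 : ∀ P : Subgroup (Perm (VA p d m)),
      (P : Set (Perm (VA p d m))) ⊆ KSet (X : Set (Perm (VA p d m))) →
      IsPGroup p P →
      (∀ g ∈ KSet (X : Set (Perm (VA p d m))), ∀ t ∈ P, g * t * g⁻¹ ∈ P) → P ≤ N)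
    -- `W` is the orbit of the zero vertex under `N`
    (W : Set (VA p d m))
    (hW : W = {v | ∃ g ∈ N, g (0 : VA p d m) = v}) :
    -- (1) `W ⊆ C` and `W` is an `X_0`-invariant `F_p`-subspace of `V`
    (W ⊆ C ∧ (0 : VA p d m) ∈ W ∧
      (∀ a ∈ W, ∀ b ∈ W, a + b ∈ W) ∧
      (∀ c : ZMod p, ∀ a ∈ W, c • a ∈ W) ∧
      (∀ x ∈ X, x (0 : VA p d m) = 0 → ∀ w ∈ W, x w ∈ W)) ∧
    -- (2) `N = T_W` and `X_W = T_W ⋊ X_0`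
    (((N : Set (Perm (VA p d m))) = {g | ∃ α ∈ W, ∀ v, g v = v + α}) ∧
      ({x : Perm (VA p d m) | x ∈ X ∧ x '' W = W} =
        {g | ∃ α ∈ W, ∃ y, y ∈ X ∧ y (0 : VA p d m) = 0 ∧ g = Equiv.addRight α * y}) ∧
      (∀ x ∈ X, x '' W = W → ∀ α ∈ W,
        ∃ β ∈ W, x * Equiv.addRight α * x⁻¹ = Equiv.addRight β) ∧
      (∀ α ∈ W, (Equiv.addRight α : Perm (VA p d m)) 0 = 0 → α = 0)) ∧
    -- (3) `W` is `(X_W,2)`-neighbour-transitive with minimum distance at least 5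
    (NbrTrans {x : Perm (VA p d m) | x ∈ X ∧ x '' W = W} W 2 ∧
      (∀ u ∈ W, ∀ v ∈ W, u ≠ v → 5 ≤ hammingDist u v)) ∧
    -- (4) `W` is `X_W`-alphabet-affine
    AlphabetAffine {x : Perm (VA p d m) | x ∈ X ∧ x '' W = W} W := by
  classical
  haveI : Fact p.Prime := ⟨hp⟩
  obtain ⟨hQA, hImg, hKne, hMtr, hloc⟩ := hAff
  have h2t : ∀ i : Fin m, ∀ a b a' b' : QA p d, a ≠ b → a' ≠ b' →
      ∃ π ∈ indQ (X : Set (Perm (VA p d m))) i, π a = a' ∧ π b = b' := fun i => (hloc i).1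
  have htr : ∀ i : Fin m, (TransSub (QA p d) : Set (Perm (QA p d))) ⊆
      indQ (X : Set (Perm (VA p d m))) i := fun i => (hloc i).2.1
  have hnm : ∀ i : Fin m, ∀ π ∈ indQ (X : Set (Perm (VA p d m))) i,
      ∀ t ∈ TransSub (QA p d), π * t * π⁻¹ ∈ TransSub (QA p d) := fun i => (hloc i).2.2
  have hWmem : ∀ w, w ∈ W ↔ ∃ g ∈ N, g (0 : VA p d m) = w := by
    intro w; rw [hW]; exact Iff.rfl
  -- N is normal in X
  have hNconj : ∀ x ∈ X, ∀ n ∈ N, x * n * x⁻¹ ∈ N := by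
    intro x hx n hn
    have hxq := hQA x hx
    let Nx : Subgroup (Perm (VA p d m)) :=
      { carrier := {y | x⁻¹ * y * x ∈ N}
        one_mem' := by
          show x⁻¹ * 1 * x ∈ N
          simpa using N.one_mem
        mul_mem' := by
          intro a b ha hb
          show x⁻¹ * (a * b) * x ∈ N
          have e : x⁻¹ * (a * b) * x = (x⁻¹ * a * x) * (x⁻¹ * b * x) := by group
          rw [e]
          exact N.mul_mem ha hb
        inv_mem' := by
          intro a ha
          show x⁻¹ * a⁻¹ * x ∈ N
          have e : x⁻¹ * a⁻¹ * x = (x⁻¹ * a * x)⁻¹ := by group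
          rw [e]
          exact N.inv_mem ha }
    have hNxK : (Nx : Set (Perm (VA p d m))) ⊆ KSet (X : Set (Perm (VA p d m))) := by
      intro y hy
      have h1 : x⁻¹ * y * x ∈ N := hy
      have h2 : y = x * (x⁻¹ * y * x) * x⁻¹ := by group
      rw [h2]
      exact ks_conj hx hxq (hN1 h1)
    have hNxP : IsPGroup p Nx := by
      rintro ⟨y, hy⟩
      obtain ⟨k, hk⟩ := hN2 ⟨x⁻¹ * y * x, hy⟩
      refine ⟨k, ?_⟩
      have hk' : (x⁻¹ * y * x) ^ p ^ k = 1 := by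
        have := congrArg Subtype.val hk
        simpa using this
      rw [conj_pow_grp] at hk'
      have hy1 : y ^ p ^ k = 1 := by
        have h2 : y ^ p ^ k = x * (x⁻¹ * y ^ p ^ k * x) * x⁻¹ := by group
        rw [h2, hk']
        group
      apply Subtype.ext
      simp only [SubmonoidClass.coe_pow, OneMemClass.coe_one]
      exact hy1
    have hNxN : ∀ g ∈ KSet (X : Set (Perm (VA p d m))), ∀ t ∈ Nx, g * t * g⁻¹ ∈ Nx := by
      intro g hg t ht
      show x⁻¹ * (g * t * g⁻¹) * x ∈ N
      have e : x⁻¹ * (g * t * g⁻¹) * x = (x⁻¹ * g * x) * (x⁻¹ * t * x) * (x⁻¹ * g * x)⁻¹ := by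
        group
      rw [e]
      refine hN3 _ ?_ _ ht
      have e2 : x⁻¹ * g * x = x⁻¹ * g * (x⁻¹)⁻¹ := by rw [inv_inv]
      rw [e2]
      exact ks_conj (X.inv_mem hx) (hQA _ (X.inv_mem hx)) hg
    have hle := hN4 Nx hNxK hNxP hNxN
    have hmem : x * n * x⁻¹ ∈ Nx := by
      show x⁻¹ * (x * n * x⁻¹) * x ∈ N
      have e : x⁻¹ * (x * n * x⁻¹) * x = n := by group
      rw [e]
      exact hn
    exact hle hmem
  have hNent : (N : Set (Perm (VA p d m))) ⊆ {g | ∃ h, IsQAutPair g h 1} :=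
    fun n hn => (hN1 hn).2
  have hNX : N ≤ X := fun n hn => (hN1 hn).1
  -- entrywise translations assemble to global ones
  have htransOf : ∀ (g : Perm (VA p d m)) (h : Fin m → Perm (QA p d)), IsQAutPair g h 1 →
      (∀ i, h i ∈ TransSub (QA p d)) → ∀ v, g v = v + g 0 := by
    intro g h hpg htrg v
    funext i
    have e0 : (g 0) i = h i 0 := by
      rw [qp_apply1 hpg]
      rfl
    show g v i = v i + (g 0) i
    rw [qp_apply1 hpg, transSub_apply (htrg i) (v i), e0]
  -- every element of N is a translation
  have hNcompT : ∀ i : Fin m, ∀ κ ∈ indK (N : Set (Perm (VA p d m))) i,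
      κ ∈ TransSub (QA p d) :=
    fun i => indK_le_trans hp hd hNent hNconj hNX hN2 h2t hnm i
  have hNtr : ∀ n ∈ N, ∀ v, n v = v + n 0 := by
    intro n hn
    obtain ⟨h, hpn⟩ := hNent hn
    exact htransOf n h hpn (fun i => hNcompT i (h i) ⟨n, hn, h, hpn, rfl⟩)
  -- the global translation witness g₀ ∈ N, g₀ ≠ 1
  obtain ⟨g₀, h₀, hg₀K, hg₀ne, hg₀p, hg₀tr⟩ := exists_glob_trans hQA hKne hMtr h2t hnm htr
  have hg₀v : ∀ v, g₀ v = v + g₀ 0 := htransOf g₀ h₀ hg₀p hg₀tr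
  have hg₀N : g₀ ∈ N := by
    let P : Subgroup (Perm (VA p d m)) :=
      { carrier := {g | g ∈ KSet (X : Set (Perm (VA p d m))) ∧ ∃ α, ∀ v, g v = v + α}
        one_mem' := ⟨ks_one, 0, fun v => by simp⟩
        mul_mem' := by
          rintro a b ⟨haK, α, hα⟩ ⟨hbK, β, hβ⟩
          refine ⟨ks_mul haK hbK, β + α, fun v => ?_⟩
          rw [Perm.mul_apply, hβ, hα]
          abel
        inv_mem' := by
          rintro a ⟨haK, α, hα⟩
          refine ⟨ks_inv haK, -α, fun v => ?_⟩
          apply a.injective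
          rw [Perm.apply_inv_self, hα]
          abel }
    have hPK : (P : Set (Perm (VA p d m))) ⊆ KSet (X : Set (Perm (VA p d m))) :=
      fun g hg => hg.1
    have hPp : IsPGroup p P := by
      rintro ⟨g, hgK, α, hα⟩
      refine ⟨1, ?_⟩
      apply Subtype.ext
      rw [pow_one]
      show ((⟨g, hgK, α, hα⟩ : P) ^ p : P).val = 1
      rw [SubmonoidClass.coe_pow]
      apply Equiv.ext
      intro v
      rw [trans_pow hα p v, psmul_zero_QA hp α, add_zero]
      rfl
    have hPn : ∀ g ∈ KSet (X : Set (Perm (VA p d m))), ∀ t ∈ P, g * t * g⁻¹ ∈ P := by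
      rintro k hkK t ⟨htK, α, hα⟩
      refine ⟨ks_mul (ks_mul hkK htK) (ks_inv hkK), ?_⟩
      obtain ⟨hkX, h, hpk⟩ := hkK
      refine ⟨fun i => linA (h i) (α i), fun v => ?_⟩
      have e1 : (k * t * k⁻¹) v = k (t (k⁻¹ v)) := rfl
      rw [e1, hα]
      funext i
      have hQi : h i ∈ indQ (X : Set (Perm (VA p d m))) i := ⟨k, hkX, h, 1, hpk, rfl, rfl⟩
      have haffi : IsAff (h i) := isAff_of_norm (fun t' ht' => hnm i (h i) hQi t' ht')
      have e2 : k (k⁻¹ v + α) i = h i ((k⁻¹ v) i + α i) := by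
        rw [qp_apply1 hpk]
        rfl
      rw [e2, haffi ((k⁻¹ v) i) (α i)]
      have e3 : h i ((k⁻¹ v) i) = v i := by
        rw [← qp_apply1 hpk, Perm.apply_inv_self]
      rw [e3]
      rfl
    exact hN4 P hPK hPp hPn ⟨hg₀K, g₀ 0, hg₀v⟩
  -- basic W facts
  have hW0 : (0 : VA p d m) ∈ W := (hWmem 0).mpr ⟨1, N.one_mem, rfl⟩
  have hWC : W ⊆ C := by
    intro w hw
    obtain ⟨n, hn, hn0⟩ := (hWmem w).mp hw
    rw [← hn0, ← hImg n (hNX hn)]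
    exact Set.mem_image_of_mem _ h0
  have hWadd : ∀ a ∈ W, ∀ b ∈ W, a + b ∈ W := by
    intro a ha b hb
    obtain ⟨na, hna, hna0⟩ := (hWmem a).mp ha
    obtain ⟨nb, hnb, hnb0⟩ := (hWmem b).mp hb
    refine (hWmem _).mpr ⟨na * nb, N.mul_mem hna hnb, ?_⟩
    rw [Perm.mul_apply, hNtr na hna (nb 0), hna0, hnb0]
    abel
  have hWnsmul : ∀ (k : ℕ), ∀ a ∈ W, k • a ∈ W := by
    intro k
    induction k with
    | zero => intro a _; simpa using hW0
    | succ k ih =>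
        intro a ha
        rw [succ_nsmul]
        exact hWadd _ (ih a ha) _ ha
  have hWneg : ∀ a ∈ W, -a ∈ W := by
    intro a ha
    have hpa : p • a = 0 := psmul_zero_QA hp a
    have h1 : (p - 1) • a ∈ W := hWnsmul (p - 1) a ha
    have h2 : (p - 1) • a = -a := by
      have hp1 : p - 1 + 1 = p := Nat.succ_pred_eq_of_pos hp.pos
      have : (p - 1) • a + a = p • a := by
        rw [← succ_nsmul, hp1]
      rw [hpa] at this
      exact eq_neg_of_add_eq_zero_left this
    rw [← h2]
    exact h1
  have hWsmul : ∀ c : ZMod p, ∀ a ∈ W, c • a ∈ W := by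
    haveI : NeZero p := ⟨hp.pos.ne'⟩
    intro c a ha
    have h1 : ((c.val : ZMod p)) = c := by rw [ZMod.natCast_val, ZMod.cast_id]
    have h2 : c • a = c.val • a := by
      calc c • a = ((c.val : ZMod p)) • a := by rw [h1]
        _ = c.val • a := Nat.cast_smul_eq_nsmul _ _ _
    rw [h2]
    exact hWnsmul c.val a ha
  have hX0mem : ∀ x ∈ (X : Set (Perm (VA p d m))), x 0 = 0 → ∀ w ∈ W, x w ∈ W := by
    intro x hx hx0 w hw
    obtain ⟨n, hn, hn0⟩ := (hWmem w).mp hw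
    refine (hWmem _).mpr ⟨x * n * x⁻¹, hNconj x hx n hn, ?_⟩
    have hxinv0 : x⁻¹ (0 : VA p d m) = 0 := by
      apply x.injective
      rw [Perm.apply_inv_self, hx0]
    rw [Perm.mul_apply, Perm.mul_apply, hxinv0, hn0]
  have hX0img : ∀ x ∈ (X : Set (Perm (VA p d m))), x 0 = 0 → x '' W = W := by
    intro x hx hx0
    apply perm_image_of_invariant
    · exact hX0mem x hx hx0
    · refine hX0mem x⁻¹ (X.inv_mem hx) ?_
      apply x.injective
      rw [Perm.apply_inv_self, hx0]
  have haddRightW : ∀ α ∈ W, Equiv.addRight α ∈ N := by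
    intro α hα
    obtain ⟨n, hn, hn0⟩ := (hWmem α).mp hα
    have he : Equiv.addRight α = n := by
      apply Equiv.ext
      intro v
      rw [hNtr n hn v, hn0]
      rfl
    rw [he]
    exact hn
  have hNW : ∀ n ∈ N, n '' W = W := by
    intro n hn
    apply perm_image_of_invariant
    · intro s hs
      rw [hNtr n hn s]
      exact hWadd s hs _ ((hWmem _).mpr ⟨n, hn, rfl⟩)
    · intro s hs
      rw [hNtr n⁻¹ (N.inv_mem hn) s]
      exact hWadd s hs _ ((hWmem _).mpr ⟨n⁻¹, N.inv_mem hn, rfl⟩)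
  have hNset : (N : Set (Perm (VA p d m))) = {g | ∃ α ∈ W, ∀ v, g v = v + α} := by
    apply Set.ext
    intro g
    constructor
    · intro hg
      exact ⟨g 0, (hWmem _).mpr ⟨g, hg, rfl⟩, hNtr g hg⟩
    · rintro ⟨α, hα, hgv⟩
      obtain ⟨n, hn, hn0⟩ := (hWmem α).mp hα
      have he : g = n := by
        apply Equiv.ext
        intro v
        rw [hgv, hNtr n hn v, hn0]
      rw [he]
      exact hn
  have hNXW : ∀ n ∈ N, n ∈ {x : Perm (VA p d m) | x ∈ X ∧ x '' W = W} :=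
    fun n hn => ⟨hNX hn, hNW n hn⟩
  have hXWmul : ∀ a ∈ {x : Perm (VA p d m) | x ∈ X ∧ x '' W = W},
      ∀ b ∈ {x : Perm (VA p d m) | x ∈ X ∧ x '' W = W},
      a * b ∈ {x : Perm (VA p d m) | x ∈ X ∧ x '' W = W} := by
    rintro a ⟨haX, haW⟩ b ⟨hbX, hbW⟩
    exact ⟨X.mul_mem haX hbX, by rw [perm_image_mul, hbW, haW]⟩
  have h2b : {x : Perm (VA p d m) | x ∈ X ∧ x '' W = W} =
      {g | ∃ α ∈ W, ∃ y, y ∈ X ∧ y (0 : VA p d m) = 0 ∧ g = Equiv.addRight α * y} := by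
    apply Set.ext
    intro x
    constructor
    · rintro ⟨hxX, hxW⟩
      have hα : x 0 ∈ W := by
        rw [← hxW]
        exact Set.mem_image_of_mem _ hW0
      refine ⟨x 0, hα, (Equiv.addRight (x 0))⁻¹ * x,
        X.mul_mem (X.inv_mem (hNX (haddRightW _ hα))) hxX, ?_, ?_⟩
      · rw [Perm.mul_apply, addRight_inv_apply, sub_self]
      · rw [mul_inv_cancel_left]
    · rintro ⟨α, hα, y, hyX, hy0, rfl⟩
      refine ⟨X.mul_mem (hNX (haddRightW α hα)) hyX, ?_⟩
      rw [perm_image_mul, hX0img y hyX hy0, hNW _ (haddRightW α hα)]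
  have h2c : ∀ x ∈ X, x '' W = W → ∀ α ∈ W,
      ∃ β ∈ W, x * Equiv.addRight α * x⁻¹ = Equiv.addRight β := by
    intro x hxX _ α hα
    have hc : x * Equiv.addRight α * x⁻¹ ∈ (N : Set (Perm (VA p d m))) :=
      hNconj x hxX _ (haddRightW α hα)
    rw [hNset] at hc
    obtain ⟨β, hβ, hv⟩ := hc
    refine ⟨β, hβ, Equiv.ext fun v => ?_⟩
    rw [hv v]
    rfl
  -- the alphabet-affine structure for X_W
  have hTiN : ∀ i : Fin m, ∀ f : QA p d, ∃ κ ∈ indK (N : Set (Perm (VA p d m))) i,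
      ∀ v, κ v = v + f := fun i =>
    exists_trans_indK_of_le_trans hNconj hN1 hMtr h2t hnm hg₀N hg₀ne i (hNcompT i)
  have hindKtoXW : ∀ i : Fin m, ∀ κ ∈ indK (N : Set (Perm (VA p d m))) i,
      κ ∈ indQ {x : Perm (VA p d m) | x ∈ X ∧ x '' W = W} i := by
    rintro i κ ⟨n, hn, h, hpn, rfl⟩
    exact ⟨n, hNXW n hn, h, 1, hpn, rfl, rfl⟩
  haveI : Fact (1 < p) := ⟨hp.one_lt⟩
  have ha1 : (fun _ => (1 : ZMod p) : QA p d) ≠ 0 := by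
    intro hc
    have := congrFun hc ⟨0, hd⟩
    exact one_ne_zero this
  refine ⟨⟨hWC, hW0, hWadd, hWsmul, fun x hx hx0 w hw => hX0mem x hx hx0 w hw⟩,
    ⟨hNset, h2b, h2c, ?_⟩, ⟨?_, fun u hu v hv hne => hδ u (hWC hu) v (hWC hv) hne⟩,
    ?_, ?_, ?_, ?_, ?_⟩
  · -- (2d)
    intro α hα h0α
    simpa using h0α
  · -- (3a)
    exact nbrW hQA hImg hNT hδ h0 hWC hWadd hWneg
      (fun α hα => hNX (haddRightW α hα)) hX0img
  · -- (4.1)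
    intro g hg
    exact hQA g hg.1
  · -- (4.2)
    intro g hg
    exact hg.2
  · -- (4.3)
    exact ⟨g₀, ⟨hNXW g₀ hg₀N, h₀, hg₀p⟩, hg₀ne⟩
  · -- (4.4) entry transitivity
    intro i j
    obtain ⟨x, hxX, hx0, h, σ, hpair, hσ, -, -⟩ :=
      stab0_move hQA hImg hNT hδ h0 i j _ _ ha1 ha1
    exact ⟨x, ⟨hxX, hX0img x hxX hx0⟩, h, σ, hpair, hσ⟩
  · -- (4.5) local conditions
    intro i
    refine ⟨?_, ?_, ?_⟩
    · -- 2-transitivity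
      intro a b a' b' hab ha'b'
      obtain ⟨κ₁, hκ₁, hκ₁v⟩ := hTiN i (-a)
      obtain ⟨κ₂, hκ₂, hκ₂v⟩ := hTiN i a'
      have hba : b + -a ≠ 0 := by
        rw [← sub_eq_add_neg, sub_ne_zero]
        exact Ne.symm hab
      have hba' : b' + -a' ≠ 0 := by
        rw [← sub_eq_add_neg, sub_ne_zero]
        exact Ne.symm ha'b'
      obtain ⟨x, hxX, hx0, h, σ, hpair, hσ, hmap, hl0⟩ :=
        stab0_move hQA hImg hNT hδ h0 i i (b + -a) (b' + -a') hba hba'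
      have hρQ : h i ∈ indQ {x : Perm (VA p d m) | x ∈ X ∧ x '' W = W} i :=
        ⟨x, ⟨hxX, hX0img x hxX hx0⟩, h, σ, hpair, hσ, rfl⟩
      have hκ₁Q := hindKtoXW i κ₁ hκ₁
      have hκ₂Q := hindKtoXW i κ₂ hκ₂
      refine ⟨κ₂ * (h i * κ₁), indQ_mulS hXWmul hκ₂Q (indQ_mulS hXWmul hρQ hκ₁Q), ?_, ?_⟩
      · rw [Perm.mul_apply, Perm.mul_apply, hκ₁v a]
        have hz : a + -a = 0 := by abel
        rw [hz, hl0 i, hκ₂v 0, zero_add]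
      · rw [Perm.mul_apply, Perm.mul_apply, hκ₁v b, hmap, hκ₂v]
        abel
    · -- translations
      intro t ht
      obtain ⟨κ, hκ, hκv⟩ := hTiN i (t 0)
      have he : κ = t := by
        apply Equiv.ext
        intro v
        rw [hκv v, transSub_apply ht v]
      rw [← he]
      exact hindKtoXW i κ hκ
    · -- normalization
      rintro π ⟨x, hx, h, σ, hpp, hσ, hc⟩ t ht
      exact hnm i π ⟨x, hx.1, h, σ, hpp, hσ, hc⟩ t ht

end Paper
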